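/- The smooth function F(x,y,z) = xyz + x + y + z does not satisfy the identity F_{yz} F_x = F_{xz} F_y on all of ℝ³; consequently there exist no C² functions f, g : ℝ² → ℝ with F(x,y,z) = g(f(x,y), z) for all (x,y,z) ∈ ℝ³. -/
import Mathlib


/-- The polynomial function `F(x,y,z) = xyz + x + y + z`. -/
noncomputable def F1 : ℝ → ℝ → ℝ → ℝ := fun x y z => x * y * z + x + y + z

lemma F1_dz (x y z : ℝ) : deriv (fun z' => F1 x y z') z = x * y + 1 := by
  have h1 : HasDerivAt (fun z' : ℝ => z') 1 z := hasDerivAt_id z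
  have : HasDerivAt (fun z' => F1 x y z') (x * y * 1 + 1) z := by
    unfold F1
    exact (((h1.const_mul (x * y)).add_const x).add_const y).add h1
  simpa using this.deriv

lemma F1_dx (x y z : ℝ) : deriv (fun x' => F1 x' y z) x = y * z + 1 := by
  have h1 : HasDerivAt (fun x' : ℝ => x') 1 x := hasDerivAt_id x
  have hm : HasDerivAt (fun x' : ℝ => x' * y * z) (1 * y * z) x :=
    (h1.mul_const y).mul_const z
  have : HasDerivAt (fun x' => F1 x' y z) (1 * y * z + 1) x := by
    unfold F1
    exact ((hm.add h1).add_const y).add_const z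
  simpa using this.deriv

lemma F1_dy (x y z : ℝ) : deriv (fun y' => F1 x y' z) y = x * z + 1 := by
  have h1 : HasDerivAt (fun y' : ℝ => y') 1 y := hasDerivAt_id y
  have hm : HasDerivAt (fun y' : ℝ => x * y' * z) (x * 1 * z) y :=
    (h1.const_mul x).mul_const z
  have : HasDerivAt (fun y' => F1 x y' z) ((x * 1 * z + 1) + 0) y := by
    unfold F1
    exact (((hm.add_const x).add h1).add_const z).congr_deriv (by ring)
  simpa using this.deriv

/-- `F(x,y,z) = xyz + x + y + z` does not satisfy
`F_{yz} F_x = F_{xz} F_y` on all of ℝ³, and consequently it is not a C²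
superposition of the form `g(f(x,y), z)`. -/
theorem stmt1 :
    (¬ ∀ x y z : ℝ,
        deriv (fun y' => deriv (fun z' => F1 x y' z') z) y *
          deriv (fun x' => F1 x' y z) x =
        deriv (fun x' => deriv (fun z' => F1 x' y z') z) x *
          deriv (fun y' => F1 x y' z) y) ∧
    ¬ ∃ f g : ℝ → ℝ → ℝ,
        ContDiff ℝ 2 (Function.uncurry f) ∧ ContDiff ℝ 2 (Function.uncurry g) ∧
        ∀ x y z : ℝ, F1 x y z = g (f x y) z := by
  constructor
  · intro h
    have h100 := h 1 0 0
    have hyz : deriv (fun y' => deriv (fun z' => F1 1 y' z') 0) 0 = 1 := by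
      have : (fun y' : ℝ => deriv (fun z' => F1 1 y' z') 0) = fun y' : ℝ => 1 * y' + 1 := by
        funext y'; exact F1_dz 1 y' 0
      rw [this]
      have h1 : HasDerivAt (fun y' : ℝ => 1 * y' + 1) (1 * 1) (0 : ℝ) :=
        ((hasDerivAt_id (0:ℝ)).const_mul 1).add_const 1
      simpa using h1.deriv
    have hxz : deriv (fun x' => deriv (fun z' => F1 x' 0 z') 0) 1 = 0 := by
      have : (fun x' : ℝ => deriv (fun z' => F1 x' 0 z') 0) = fun x' : ℝ => x' * 0 + 1 := by
        funext x'; exact F1_dz x' 0 0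
      rw [this]
      have h1 : HasDerivAt (fun x' : ℝ => x' * 0 + 1) (1 * 0) (1 : ℝ) :=
        ((hasDerivAt_id (1:ℝ)).mul_const 0).add_const 1
      simpa using h1.deriv
    rw [hyz, hxz, F1_dx, F1_dy] at h100
    norm_num at h100
  · rintro ⟨f, g, hf, hg, h⟩
    -- For every `c ≠ 1`, `c` lies in the range of `fun q : ℚ => g q 0`.
    have key : ∀ c : ℝ, c ≠ 1 → ∃ q : ℚ, g (q : ℝ) 0 = c := by
      intro c hc
      -- endpoints of the path s ↦ f s (c - s)
      set t0 := f 0 c with ht0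
      set t1 := f 1 (c - 1) with ht1
      have hne : t0 ≠ t1 := by
        intro he
        have e0 := h 0 c 1
        have e1 := h 1 (c - 1) 1
        rw [← ht0] at e0; rw [← ht1] at e1
        rw [he] at e0
        have e2 := e0.trans e1.symm
        unfold F1 at e2
        exact hc (by linarith)
      -- the path is continuous
      have hcont : Continuous (fun s : ℝ => f s (c - s)) := by
        have := hf.continuous
        exact this.comp (continuous_id.prodMk (continuous_const.sub continuous_id))
      -- pick a rational strictly between t0 and t1
      obtain ⟨q, hq1, hq2⟩ := exists_rat_btwn (min_lt_max.mpr hne)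
      have hqmem : (q : ℝ) ∈ Set.uIcc t0 t1 := by
        rw [Set.uIcc_eq_union]
        rcases le_total t0 t1 with hle | hle
        · left
          constructor
          · calc t0 = min t0 t1 := (min_eq_left hle).symm
              _ ≤ (q : ℝ) := le_of_lt hq1
          · calc (q : ℝ) ≤ max t0 t1 := le_of_lt hq2
              _ = t1 := max_eq_right hle
        · right
          constructor
          · calc t1 = min t0 t1 := (min_eq_right hle).symm
              _ ≤ (q : ℝ) := le_of_lt hq1
          · calc (q : ℝ) ≤ max t0 t1 := le_of_lt hq2
              _ = t0 := max_eq_left hle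
      -- intermediate value theorem
      have hIVT := intermediate_value_uIcc (a := (0:ℝ)) (b := 1)
        (f := fun s : ℝ => f s (c - s)) hcont.continuousOn
      have : (q : ℝ) ∈ (fun s : ℝ => f s (c - s)) '' Set.uIcc 0 1 := by
        apply hIVT
        simpa [ht0, ht1] using hqmem
      obtain ⟨s, _, hs⟩ := this
      simp only [] at hs
      refine ⟨q, ?_⟩
      have := h s (c - s) 0
      rw [show f s (c - s) = (q : ℝ) from hs] at this
      unfold F1 at this
      linarith [this]
    -- hence ℝ is countable, contradiction
    have hsub : {c : ℝ | c ≠ 1} ⊆ Set.range (fun q : ℚ => g (q : ℝ) 0) := by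
      intro c hc
      obtain ⟨q, hq⟩ := key c hc
      exact ⟨q, hq⟩
    have hcnt : ({c : ℝ | c ≠ 1}).Countable :=
      (Set.countable_range _).mono hsub
    have : (Set.univ : Set ℝ).Countable := by
      have : (Set.univ : Set ℝ) = insert (1 : ℝ) {c : ℝ | c ≠ 1} := by
        ext c
        simp [em]
      rw [this]
      exact hcnt.insert 1
    exact Cardinal.not_countable_real this
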